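/- Assume V⁺ admits a monomial parametrization with exponent matrix A (data p, A, K, ψ) and that the cone generator matrix E has no zero row. Then there exist k ∈ K and distinct a, b ∈ ℝ_{>0}^n with (k,a) ∈ V⁺, (k,b) ∈ V⁺ and Z(b − a) = 0, if and only if sign(rs(A)) ∩ sign(im(S)) ≠ {0}. -/

import Mathlib

open Matrix

noncomputable section

/-- The monomial map φ: `phi Y x j = ∏ i, x i ^ Y i j`. -/
def phi {n r : ℕ} (Y : Matrix (Fin n) (Fin r) ℕ) (x : Fin n → ℝ) : Fin r → ℝ :=
  fun j => ∏ i, x i ^ Y i j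

/-- The positive steady state variety V⁺. -/
def Vplus {n r : ℕ} (Y : Matrix (Fin n) (Fin r) ℕ) (S : Matrix (Fin n) (Fin r) ℝ) :
    Set ((Fin r → ℝ) × (Fin n → ℝ)) :=
  {p | (∀ j, 0 < p.1 j) ∧ (∀ i, 0 < p.2 i) ∧
    S.mulVec (fun j => p.1 j * phi Y p.2 j) = 0}

/-- `E` is a cone generator matrix for `S`:
`E` is nonnegative and `ker S ∩ ℝ_{≥0}^r = {Eλ : λ ≥ 0}`. -/
def IsConeGenMatrix {n r d : ℕ} (S : Matrix (Fin n) (Fin r) ℝ)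
    (E : Matrix (Fin r) (Fin d) ℝ) : Prop :=
  (∀ j l, 0 ≤ E j l) ∧
  {v : Fin r → ℝ | S.mulVec v = 0 ∧ ∀ j, 0 ≤ v j} =
    {v : Fin r → ℝ | ∃ lam : Fin d → ℝ, (∀ l, 0 ≤ lam l) ∧ v = E.mulVec lam}

/-- The coefficient cone Λ(E). -/
def Lambda {r d : ℕ} (E : Matrix (Fin r) (Fin d) ℝ) : Set (Fin d → ℝ) :=
  {lam | (∀ l, 0 ≤ lam l) ∧ ∀ j, 0 < E.mulVec lam j}

/-- `ξ^B`: for a rational `q × m` matrix `B`, `(ξ^B) j = ∏ i, ξ i ^ (B i j)` (real powers). -/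
def vecPow {q m : ℕ} (ξ : Fin q → ℝ) (B : Matrix (Fin q) (Fin m) ℚ) : Fin m → ℝ :=
  fun j => ∏ i, ξ i ^ ((B i j : ℝ))

/-- V⁺ admits a monomial parametrization with exponent matrix `A` (data `p`, `A`, `K`, `ψ`). -/
def IsMonomialParamExp {n r : ℕ} (Y : Matrix (Fin n) (Fin r) ℕ)
    (S : Matrix (Fin n) (Fin r) ℝ) (p : ℕ) (A : Matrix (Fin (n - p)) (Fin n) ℚ)
    (K : Set (Fin r → ℝ)) (ψ : (Fin r → ℝ) → (Fin n → ℝ)) : Prop :=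
  p < n ∧ A.rank = n - p ∧ (∀ k ∈ K, ∀ j, 0 < k j) ∧ (∀ k ∈ K, ∀ i, 0 < ψ k i) ∧
  ∀ k x, (∀ j : Fin r, 0 < k j) → (∀ i : Fin n, 0 < x i) →
    ((k, x) ∈ Vplus Y S ↔ k ∈ K ∧
      ∃ ξ : Fin (n - p) → ℝ, (∀ l, 0 < ξ l) ∧ x = fun i => ψ k i * vecPow ξ A i)

/-- `Z` is a conservation matrix for `S` (with `s = rank S`):
its rows form a basis of the left kernel of `S`. -/
def IsConservationMatrix {n r : ℕ} (S : Matrix (Fin n) (Fin r) ℝ) (s : ℕ)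
    (Z : Matrix (Fin (n - s)) (Fin n) ℝ) : Prop :=
  S.rank = s ∧ s < n ∧ LinearIndependent ℝ (fun i => Z i) ∧
    Submodule.span ℝ (Set.range (fun i => Z i)) = LinearMap.ker S.vecMulLinear

/-- `im₊(Z) = {Zx : x ≥ 0}`. -/
def imPos {m n : ℕ} (Z : Matrix (Fin m) (Fin n) ℝ) : Set (Fin m → ℝ) :=
  {c | ∃ x : Fin n → ℝ, (∀ i, 0 ≤ x i) ∧ c = Z.mulVec x}

/-- The real row space of a rational matrix. -/
def rowSpace {q m : ℕ} (A : Matrix (Fin q) (Fin m) ℚ) : Submodule ℝ (Fin m → ℝ) :=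
  Submodule.span ℝ (Set.range (fun l => fun i => ((A l i : ℝ))))

/-- The column space (image) of `S`. -/
def colSpace {n r : ℕ} (S : Matrix (Fin n) (Fin r) ℝ) : Submodule ℝ (Fin n → ℝ) :=
  LinearMap.range S.mulVecLin

/-- Componentwise sign of a vector. -/
def signVec {m : ℕ} (v : Fin m → ℝ) : Fin m → ℝ := fun i => Real.sign (v i)

/-! ### Auxiliary lemmas -/

lemma aux_sign_mul_pos {c x : ℝ} (hc : 0 < c) : Real.sign (c * x) = Real.sign x := by
  rcases lt_trichotomy x 0 with h | h | h
  · rw [Real.sign_of_neg h, Real.sign_of_neg (mul_neg_of_pos_of_neg hc h)]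
  · simp [h]
  · rw [Real.sign_of_pos h, Real.sign_of_pos (mul_pos hc h)]

lemma aux_sign_exp_sub_exp (t₁ t₂ : ℝ) :
    Real.sign (Real.exp t₂ - Real.exp t₁) = Real.sign (t₂ - t₁) := by
  rcases lt_trichotomy t₂ t₁ with h | h | h
  · rw [Real.sign_of_neg (sub_neg.mpr (Real.exp_lt_exp.mpr h)),
      Real.sign_of_neg (sub_neg.mpr h)]
  · simp [h]
  · rw [Real.sign_of_pos (sub_pos.mpr (Real.exp_lt_exp.mpr h)),
      Real.sign_of_pos (sub_pos.mpr h)]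

lemma aux_pos_of_sign_eq_one {x : ℝ} (h : Real.sign x = 1) : 0 < x := by
  rcases lt_trichotomy x 0 with h' | h' | h'
  · rw [Real.sign_of_neg h'] at h; norm_num at h
  · rw [h', Real.sign_zero] at h; norm_num at h
  · exact h'

lemma aux_neg_of_sign_eq_neg_one {x : ℝ} (h : Real.sign x = -1) : x < 0 := by
  rcases lt_trichotomy x 0 with h' | h' | h'
  · exact h'
  · rw [h', Real.sign_zero] at h; norm_num at h
  · rw [Real.sign_of_pos h'] at h; norm_num at h

lemma phi_pos {n r : ℕ} (Y : Matrix (Fin n) (Fin r) ℕ) {x : Fin n → ℝ}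
    (hx : ∀ i, 0 < x i) (j : Fin r) : 0 < phi Y x j :=
  Finset.prod_pos fun i _ => pow_pos (hx i) _

lemma vecPow_pos {q m : ℕ} {ξ : Fin q → ℝ} (hξ : ∀ l, 0 < ξ l)
    (B : Matrix (Fin q) (Fin m) ℚ) (j : Fin m) : 0 < vecPow ξ B j :=
  Finset.prod_pos fun i _ => Real.rpow_pos_of_pos (hξ i) _

lemma vecPow_eq_exp {q m : ℕ} {ξ : Fin q → ℝ} (hξ : ∀ l, 0 < ξ l)
    (B : Matrix (Fin q) (Fin m) ℚ) (j : Fin m) :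
    vecPow ξ B j = Real.exp (∑ l, Real.log (ξ l) * (B l j : ℝ)) := by
  rw [Real.exp_sum]
  exact Finset.prod_congr rfl fun l _ => Real.rpow_def_of_pos (hξ l) _

lemma aux_row_in_left_ker {n r s : ℕ} {S : Matrix (Fin n) (Fin r) ℝ}
    {Z : Matrix (Fin (n - s)) (Fin n) ℝ} (hZ : IsConservationMatrix S s Z) :
    Z * S = 0 := by
  obtain ⟨-, -, -, hspan⟩ := hZ
  ext i j
  have hmem : Z i ∈ Submodule.span ℝ (Set.range fun i => Z i) :=
    Submodule.subset_span ⟨i, rfl⟩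
  rw [hspan, LinearMap.mem_ker] at hmem
  have h0 : Z i ᵥ* S = 0 := hmem
  have := congrFun h0 j
  simpa [Matrix.mul_apply, Matrix.vecMul, dotProduct] using this

lemma aux_Z_mulVec_S {n r s : ℕ} {S : Matrix (Fin n) (Fin r) ℝ}
    {Z : Matrix (Fin (n - s)) (Fin n) ℝ} (hZ : IsConservationMatrix S s Z)
    (m : Fin r → ℝ) : Z.mulVec (S.mulVec m) = 0 := by
  rw [Matrix.mulVec_mulVec, aux_row_in_left_ker hZ, Matrix.zero_mulVec]

/-- Key lemma: the kernel of `Z` equals the image of `S`. -/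
lemma aux_ker_Z_eq_range_S {n r s : ℕ} {S : Matrix (Fin n) (Fin r) ℝ}
    {Z : Matrix (Fin (n - s)) (Fin n) ℝ} (hZ : IsConservationMatrix S s Z) :
    LinearMap.ker Z.mulVecLin = LinearMap.range S.mulVecLin := by
  obtain ⟨hrank, hsn, hli, hspan⟩ := hZ
  have hle : LinearMap.range S.mulVecLin ≤ LinearMap.ker Z.mulVecLin := by
    rintro y ⟨m, rfl⟩
    exact aux_Z_mulVec_S ⟨hrank, hsn, hli, hspan⟩ m
  have hfrS : Module.finrank ℝ (LinearMap.range S.mulVecLin) = s := hrank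
  have hfrspan : Module.finrank ℝ
      (Submodule.span ℝ (Set.range fun i => Z i)) = n - s := by
    rw [finrank_span_eq_card hli, Fintype.card_fin]
  have hZrank : Z.rank = n - s := by
    rw [← Matrix.rank_transpose]
    show Module.finrank ℝ (LinearMap.range Zᵀ.mulVecLin) = n - s
    rw [Matrix.mulVecLin_transpose, range_vecMulLinear]
    exact hfrspan
  have hrn := LinearMap.finrank_range_add_finrank_ker Z.mulVecLin
  rw [Module.finrank_fin_fun] at hrn
  have hZr : Module.finrank ℝ (LinearMap.range Z.mulVecLin) = n - s := hZrank
  have hker : Module.finrank ℝ (LinearMap.ker Z.mulVecLin) = s := by omega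
  exact (Submodule.eq_of_le_of_finrank_le hle (by rw [hfrS, hker])).symm

/-- multistationarity occurs iff sign(rs(A)) ∩ sign(im(S)) ≠ {0}. -/
theorem multistationarity_iff_sign_condition {n r d s p : ℕ} (hn : 1 ≤ n) (hr : 1 ≤ r)
    (Y : Matrix (Fin n) (Fin r) ℕ) (S : Matrix (Fin n) (Fin r) ℝ)
    (A : Matrix (Fin (n - p)) (Fin n) ℚ) (K : Set (Fin r → ℝ))
    (ψ : (Fin r → ℝ) → (Fin n → ℝ)) (hparam : IsMonomialParamExp Y S p A K ψ)
    (E : Matrix (Fin r) (Fin d) ℝ) (hE : IsConeGenMatrix S E)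
    (hrow : ∀ j, ∃ l, E j l ≠ 0)
    (Z : Matrix (Fin (n - s)) (Fin n) ℝ) (hZ : IsConservationMatrix S s Z) :
    (∃ k ∈ K, ∃ a b : Fin n → ℝ, a ≠ b ∧
        (k, a) ∈ Vplus Y S ∧ (k, b) ∈ Vplus Y S ∧ Z.mulVec (b - a) = 0) ↔
      ({σ : Fin n → ℝ | ∃ u ∈ rowSpace A, σ = signVec u} ∩
        {σ : Fin n → ℝ | ∃ u ∈ colSpace S, σ = signVec u} ≠ {fun _ => 0}) := by
  obtain ⟨hpn, hArank, hKpos, hψpos, hiff⟩ := hparam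
  constructor
  · -- multistationarity implies the sign condition
    rintro ⟨k, hkK, a, b, hab, haV, hbV, hZab⟩
    have hk : ∀ j, 0 < k j := haV.1
    have ha : ∀ i, 0 < a i := haV.2.1
    have hb : ∀ i, 0 < b i := hbV.2.1
    obtain ⟨-, ξ, hξ, hxa⟩ := (hiff k a hk ha).mp haV
    obtain ⟨-, η, hη, hxb⟩ := (hiff k b hk hb).mp hbV
    set u : Fin n → ℝ :=
      fun i => ∑ l, (Real.log (η l) - Real.log (ξ l)) * (A l i : ℝ) with hu
    have huA : u ∈ rowSpace A := by
      rw [rowSpace, Submodule.mem_span_range_iff_exists_fun]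
      refine ⟨fun l => Real.log (η l) - Real.log (ξ l), ?_⟩
      funext i
      simp [hu, Finset.sum_apply]
    have hsign : ∀ i, Real.sign (b i - a i) = Real.sign (u i) := by
      intro i
      have hai : a i = ψ k i * vecPow ξ A i := congrFun hxa i
      have hbi : b i = ψ k i * vecPow η A i := congrFun hxb i
      rw [hai, hbi, ← mul_sub, aux_sign_mul_pos (hψpos k hkK i),
        vecPow_eq_exp hη, vecPow_eq_exp hξ, aux_sign_exp_sub_exp]
      congr 1
      rw [hu, ← Finset.sum_sub_distrib]
      exact Finset.sum_congr rfl fun l _ => by ring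
    have hw : b - a ∈ colSpace S := by
      rw [colSpace, ← aux_ker_Z_eq_range_S hZ, LinearMap.mem_ker]
      exact hZab
    intro hcontra
    have hσ : signVec (b - a) ∈ ({fun _ => (0 : ℝ)} : Set (Fin n → ℝ)) := by
      rw [← hcontra]
      refine ⟨⟨u, huA, ?_⟩, ⟨b - a, hw, rfl⟩⟩
      funext i
      rw [signVec, signVec]
      simpa using (hsign i).symm ▸ (rfl : Real.sign ((b - a) i) = Real.sign (b i - a i))
    have hba0 : b - a = 0 := by
      funext i
      have h0 : Real.sign ((b - a) i) = 0 := congrFun hσ i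
      exact Real.sign_eq_zero_iff.mp h0
    exact hab (by funext i; have := congrFun hba0 i; simp only [Pi.sub_apply, Pi.zero_apply] at this; linarith)
  · -- the sign condition implies multistationarity
    intro hne
    -- extract a nonzero common sign vector
    have h0mem : (fun _ => (0 : ℝ)) ∈
        ({σ : Fin n → ℝ | ∃ u ∈ rowSpace A, σ = signVec u} ∩
          {σ : Fin n → ℝ | ∃ u ∈ colSpace S, σ = signVec u}) :=
      ⟨⟨0, Submodule.zero_mem _, by funext i; simp [signVec]⟩,
        ⟨0, Submodule.zero_mem _, by funext i; simp [signVec]⟩⟩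
    obtain ⟨σ, hσmem, hσne⟩ : ∃ σ ∈
        ({σ : Fin n → ℝ | ∃ u ∈ rowSpace A, σ = signVec u} ∩
          {σ : Fin n → ℝ | ∃ u ∈ colSpace S, σ = signVec u}), σ ≠ fun _ => 0 := by
      by_contra hcon
      push_neg at hcon
      exact hne (Set.eq_singleton_iff_unique_mem.mpr ⟨h0mem, hcon⟩)
    obtain ⟨⟨u, huA, hσu⟩, ⟨w, hwS, hσw⟩⟩ := hσmem
    have hsgn : ∀ i, Real.sign (w i) = Real.sign (u i) := by
      intro i
      have h1 := congrFun hσu i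
      have h2 := congrFun hσw i
      rw [signVec] at h1 h2
      rw [← h1, ← h2]
    obtain ⟨i₀, hi₀⟩ : ∃ i, σ i ≠ 0 := by
      by_contra hcon
      push_neg at hcon
      exact hσne (funext hcon)
    have hui₀ : u i₀ ≠ 0 := by
      intro h0
      apply hi₀
      rw [congrFun hσu i₀, signVec, h0, Real.sign_zero]
    -- construct the two steady states
    set a : Fin n → ℝ :=
      fun i => if u i = 0 then 1 else w i / (Real.exp (u i) - 1) with hadef
    have hapos : ∀ i, 0 < a i := by
      intro i
      by_cases h : u i = 0
      · simp [hadef, h]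
      · rw [hadef]
        simp only [if_neg h]
        rcases lt_or_gt_of_ne h with hlt | hgt
        · have hw' : w i < 0 := aux_neg_of_sign_eq_neg_one
            (by rw [hsgn i, Real.sign_of_neg hlt])
          have he : Real.exp (u i) - 1 < 0 :=
            sub_neg.mpr (Real.exp_lt_one_iff.mpr hlt)
          exact div_pos_of_neg_of_neg hw' he
        · have hw' : 0 < w i := aux_pos_of_sign_eq_one
            (by rw [hsgn i, Real.sign_of_pos hgt])
          have he : 0 < Real.exp (u i) - 1 :=
            sub_pos.mpr (Real.one_lt_exp_iff.mpr hgt)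
          exact div_pos hw' he
    set b : Fin n → ℝ := fun i => a i * Real.exp (u i) with hbdef
    have hbpos : ∀ i, 0 < b i := fun i => mul_pos (hapos i) (Real.exp_pos _)
    have hba : ∀ i, b i - a i = w i := by
      intro i
      by_cases h : u i = 0
      · have hwz : w i = 0 := Real.sign_eq_zero_iff.mp (by rw [hsgn i, h, Real.sign_zero])
        simp [hbdef, hwz, h]
      · have hne1 : Real.exp (u i) - 1 ≠ 0 :=
          sub_ne_zero.mpr (fun hc => h ((Real.exp_eq_one_iff _).mp hc))
        rw [hbdef, hadef]
        simp only [if_neg h]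
        field_simp
    have habne : a ≠ b := by
      intro hc
      have h1 : a i₀ = a i₀ * Real.exp (u i₀) := congrFun hc i₀
      have h2 : (1 : ℝ) = Real.exp (u i₀) :=
        mul_left_cancel₀ (hapos i₀).ne' (by rw [mul_one]; exact h1)
      exact hui₀ ((Real.exp_eq_one_iff _).mp h2.symm)
    -- construct the rate constants k
    set vpos : Fin r → ℝ := E.mulVec (fun _ => 1) with hvdef
    have hvmem : vpos ∈ {v : Fin r → ℝ | S.mulVec v = 0 ∧ ∀ j, 0 ≤ v j} := by
      rw [hE.2]
      exact ⟨fun _ => 1, fun l => zero_le_one, rfl⟩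
    have hvposj : ∀ j, 0 < vpos j := by
      intro j
      obtain ⟨l₀, hl₀⟩ := hrow j
      rw [hvdef]
      show 0 < ∑ l, E j l * 1
      refine Finset.sum_pos' (fun l _ => mul_nonneg (hE.1 j l) zero_le_one) ⟨l₀, Finset.mem_univ _, ?_⟩
      rw [mul_one]
      exact lt_of_le_of_ne (hE.1 j l₀) (Ne.symm hl₀)
    set k : Fin r → ℝ := fun j => vpos j / phi Y a j with hkdef
    have hkpos : ∀ j, 0 < k j := fun j => div_pos (hvposj j) (phi_pos Y hapos j)
    have hkphi : (fun j => k j * phi Y a j) = vpos := by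
      funext j
      rw [hkdef]
      exact div_mul_cancel₀ _ (phi_pos Y hapos j).ne'
    have haV : (k, a) ∈ Vplus Y S := by
      refine ⟨hkpos, hapos, ?_⟩
      show S.mulVec (fun j => k j * phi Y a j) = 0
      rw [hkphi]
      exact hvmem.1
    obtain ⟨hkK, ξ, hξpos, hxa⟩ := (hiff k a hkpos hapos).mp haV
    -- express u as a combination of the rows of A
    rw [rowSpace, Submodule.mem_span_range_iff_exists_fun] at huA
    obtain ⟨v, hv⟩ := huA
    have hui : ∀ i, u i = ∑ l, v l * (A l i : ℝ) := by
      intro i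
      rw [← congrFun hv i]
      simp [Finset.sum_apply]
    set η : Fin (n - p) → ℝ := fun l => ξ l * Real.exp (v l) with hηdef
    have hηpos : ∀ l, 0 < η l := fun l => mul_pos (hξpos l) (Real.exp_pos _)
    have hxb : b = fun i => ψ k i * vecPow η A i := by
      funext i
      have h1 : vecPow η A i = vecPow ξ A i * Real.exp (u i) := by
        rw [vecPow_eq_exp hηpos, vecPow_eq_exp hξpos, ← Real.exp_add, hui i]
        congr 1
        rw [← Finset.sum_add_distrib]
        refine Finset.sum_congr rfl fun l _ => ?_
        rw [hηdef]
        rw [Real.log_mul (hξpos l).ne' (Real.exp_pos _).ne', Real.log_exp]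
        ring
      rw [hbdef]
      show a i * Real.exp (u i) = ψ k i * vecPow η A i
      rw [congrFun hxa i, h1]
      ring
    have hbV : (k, b) ∈ Vplus Y S :=
      (hiff k b hkpos hbpos).mpr ⟨hkK, η, hηpos, hxb⟩
    refine ⟨k, hkK, a, b, habne, haV, hbV, ?_⟩
    have hbaw : b - a = w := by
      funext i
      rw [Pi.sub_apply, hba i]
    rw [hbaw]
    rw [colSpace] at hwS
    obtain ⟨m, hm⟩ := hwS
    rw [← hm]
    exact aux_Z_mulVec_S hZ m
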